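/- For every z ∈ ℍ, let N be the 3×3 complex matrix whose first row is (−i/z², i/z, −i), whose second row is (1/z̄², −1/z̄, 1) (z̄ denoting the complex conjugate of z), and whose third row is (2·Im(z)/|z|², π − 2·arg(z), 2·Im(z)) (real numbers regarded as complex numbers), where arg denotes the principal argument, taking values in (0, π) on ℍ. Then (1/(2π)) · det N = (4·Im(z)/(π·|z|⁴)) · (Im(z) + Re(z)·(π/2 − arg(z))), as an equality of complex numbers (the right-hand side being real). -/

import Mathlib

open ComplexConjugate

set_option maxHeartbeats 1600000 in
/-- The determinant computation in the proof of Lemma 4.2, identifying the Laplacian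
density `q(ℍ; 0, ∞; z)` of the conditioned-branch observable. -/
theorem det_q_density (z : ℂ) (hz : 0 < z.im) :
    ((1 / (2 * Real.pi) : ℝ) : ℂ) * Matrix.det
      !![-Complex.I / z ^ 2, Complex.I / z, -Complex.I;
         ((conj z) ^ 2)⁻¹, -(conj z)⁻¹, 1;
         ((2 * z.im / ‖z‖ ^ 2 : ℝ) : ℂ), ((Real.pi - 2 * Complex.arg z : ℝ) : ℂ),
           ((2 * z.im : ℝ) : ℂ)] =
    ((4 * z.im / (Real.pi * ‖z‖ ^ 4) *
        (z.im + z.re * (Real.pi / 2 - Complex.arg z)) : ℝ) : ℂ) := by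
  have hy0 : z.im ≠ 0 := ne_of_gt hz
  have hden : z.re^2 + z.im^2 ≠ 0 := by positivity
  have hpi : Real.pi ≠ 0 := Real.pi_ne_zero
  have habs : ‖z‖ ^ 2 = z.re^2 + z.im^2 := by
    rw [Complex.sq_norm, Complex.normSq_apply]; ring
  have habs4 : ‖z‖ ^ 4 = (z.re^2 + z.im^2)^2 := by
    rw [show (4:ℕ) = 2*2 from rfl, pow_mul, habs]
  rw [Matrix.det_fin_three, habs, habs4]
  simp [pow_two, Complex.ext_iff, Complex.div_re, Complex.div_im, Complex.inv_re,
    Complex.inv_im, Complex.normSq_apply, Complex.normSq_mul, Complex.add_re, Complex.add_im,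
    Complex.sub_re, Complex.sub_im, Complex.mul_re, Complex.mul_im, Complex.neg_re,
    Complex.neg_im, Complex.I_re, Complex.I_im, Complex.conj_re, Complex.conj_im,
    Complex.ofReal_re, Complex.ofReal_im, Complex.one_re, Complex.one_im, Complex.ofReal_mul,
    Complex.ofReal_div, Complex.ofReal_sub, Complex.ofReal_add, Complex.ofReal_pow,
    Complex.ofReal_ofNat]
  have hd1 : z.re * z.re + z.im * z.im ≠ 0 := by
    intro h; exact hden (by linear_combination h)
  have hq : (z.re * z.re - z.im * z.im) * (z.re * z.re - z.im * z.im) +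
      (z.re * z.im + z.im * z.re) * (z.re * z.im + z.im * z.re) ≠ 0 := by
    intro h; exact pow_ne_zero 2 hden (by linear_combination h)
  have hq' : z.re ^ 2 * z.im ^ 2 * 2 + z.re ^ 4 + z.im ^ 4 ≠ 0 := by
    intro h; exact pow_ne_zero 2 hden (by linear_combination h)
  constructor
  · field_simp [hq, hd1]
    ring_nf
    field_simp [hq']
    ring
  · field_simp [hq, hd1]
    ring_nf
    field_simp [hq']
    ring
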